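/- Let φ ∈ C¹(ℝ^d) be nonnegative with |∇φ(x)| ≤ C_φ φ(x) for all x, and let 0 < p < ∞. Then for all x, z ∈ ℝ^d: |φ^{1/p}(x+z) − φ^{1/p}(x)| ≤ w_{p,φ}(|z|) φ^{1/p}(x), where w_{p,φ}(r) = (C_φ/p) r (1 + (C_φ/p) r e^{C_φ r/p}). -/

import Mathlib

open Real

private lemma gronwall_phi {d : ℕ} {Cφ : ℝ} (hC : 0 ≤ Cφ)
    {φ : EuclideanSpace ℝ (Fin d) → ℝ} (hφ1 : ContDiff ℝ 1 φ)
    (hφ0 : ∀ x, 0 ≤ φ x) (hgrad : ∀ x, ‖gradient φ x‖ ≤ Cφ * φ x)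
    (a b : EuclideanSpace ℝ (Fin d)) :
    φ (a + b) ≤ φ a * Real.exp (Cφ * ‖b‖) := by
  set f : ℝ → ℝ := fun t => φ (a + t • b) with hf
  have hdiff : Differentiable ℝ φ := hφ1.differentiable one_ne_zero
  have hγ : ∀ t : ℝ, HasDerivAt (fun t : ℝ => a + t • b) b t := by
    intro t
    simpa using ((hasDerivAt_id t).smul_const b).const_add a
  have hfd : ∀ t : ℝ, HasDerivAt f (inner ℝ (gradient φ (a + t • b)) b : ℝ) t := by
    intro t
    have hg : HasFDerivAt φ ((InnerProductSpace.toDual ℝ _) (gradient φ (a + t • b)))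
        (a + t • b) := hasGradientAt_iff_hasFDerivAt.mp (hdiff _).hasGradientAt
    simpa [hf, Function.comp_def] using hg.comp_hasDerivAt t (hγ t)
  have key := norm_le_gronwallBound_of_norm_deriv_right_le
    (f := f) (f' := fun t => (inner ℝ (gradient φ (a + t • b)) b : ℝ))
    (δ := φ a) (K := Cφ * ‖b‖) (ε := 0) (a := 0) (b := 1)
    (fun t _ => (hfd t).continuousAt.continuousWithinAt)
    (fun t _ => (hfd t).hasDerivWithinAt)
    (by simp [hf, abs_of_nonneg (hφ0 a)])
    (by
      intro t _
      have h1 : |(inner ℝ (gradient φ (a + t • b)) b : ℝ)| ≤ ‖gradient φ (a + t • b)‖ * ‖b‖ :=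
        abs_real_inner_le_norm _ _
      have h2 : ‖gradient φ (a + t • b)‖ * ‖b‖ ≤ Cφ * φ (a + t • b) * ‖b‖ :=
        mul_le_mul_of_nonneg_right (hgrad _) (norm_nonneg b)
      have h3 : ‖f t‖ = f t := abs_of_nonneg (hφ0 _)
      calc ‖(inner ℝ (gradient φ (a + t • b)) b : ℝ)‖ ≤ Cφ * φ (a + t • b) * ‖b‖ := h1.trans h2
        _ = Cφ * ‖b‖ * ‖f t‖ + 0 := by rw [h3]; ring)
  have h1 := key 1 (by norm_num)
  rw [gronwallBound_ε0] at h1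
  have : f 1 = φ (a + b) := by simp [hf]
  rw [this, Real.norm_eq_abs, abs_of_nonneg (hφ0 _)] at h1
  simpa using h1

theorem stmt2 (d : ℕ) (Cφ p : ℝ) (hC : 0 ≤ Cφ) (hp : 0 < p)
    (φ : EuclideanSpace ℝ (Fin d) → ℝ) (hφ1 : ContDiff ℝ 1 φ)
    (hφ0 : ∀ x, 0 ≤ φ x) (hgrad : ∀ x, ‖gradient φ x‖ ≤ Cφ * φ x)
    (x z : EuclideanSpace ℝ (Fin d)) :
    |φ (x + z) ^ (1 / p) - φ x ^ (1 / p)| ≤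
      (Cφ / p * ‖z‖ * (1 + Cφ / p * ‖z‖ * Real.exp (Cφ * ‖z‖ / p))) * φ x ^ (1 / p) := by
  set A := φ x ^ (1 / p) with hA
  set B := φ (x + z) ^ (1 / p) with hB
  set a := Cφ / p * ‖z‖ with ha
  have hanneg : 0 ≤ a := mul_nonneg (div_nonneg hC hp.le) (norm_nonneg z)
  have haeq : Cφ * ‖z‖ / p = a := by rw [ha]; ring
  set E := Real.exp (Cφ * ‖z‖ / p) with hE
  have hEpos : 0 < E := Real.exp_pos _
  set F := Real.exp (-(Cφ * ‖z‖ / p)) with hF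
  have hEF : E * F = 1 := by rw [hE, hF, ← Real.exp_add]; simp
  have hFge : 1 - a ≤ F := by
    have := Real.add_one_le_exp (-(Cφ * ‖z‖ / p))
    rw [← hF] at this; linarith [haeq ▸ this]
  have hAnn : 0 ≤ A := Real.rpow_nonneg (hφ0 x) _
  have hBnn : 0 ≤ B := Real.rpow_nonneg (hφ0 _) _
  -- exp rpow
  have hexp : ∀ c : ℝ, 0 ≤ c → Real.exp c ^ (1 / p) = Real.exp (c / p) := by
    intro c _
    rw [← Real.exp_one_rpow c, ← Real.rpow_mul (Real.exp_pos 1).le, Real.exp_one_rpow]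
    congr 1
    ring
  have hup : ∀ u v : EuclideanSpace ℝ (Fin d),
      φ (u + v) ^ (1 / p) ≤ φ u ^ (1 / p) * Real.exp (Cφ * ‖v‖ / p) := by
    intro u v
    have h := gronwall_phi hC hφ1 hφ0 hgrad u v
    have := Real.rpow_le_rpow (hφ0 _) h (by positivity : (0:ℝ) ≤ 1 / p)
    rwa [Real.mul_rpow (hφ0 u) (Real.exp_pos _).le,
      hexp _ (mul_nonneg hC (norm_nonneg v))] at this
  have h1 : B ≤ A * E := by
    have := hup x z; rw [← hA, ← hB, ← hE] at this; exact this
  have h2 : A ≤ B * E := by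
    have := hup (x + z) (-z)
    rw [norm_neg] at this
    simp only [add_neg_cancel_right] at this
    exact this
  -- B ≥ A * F
  have h3 : A * F ≤ B := by
    have : A * F ≤ B * E * F := mul_le_mul_of_nonneg_right h2 (Real.exp_pos _).le
    calc A * F ≤ B * E * F := this
      _ = B := by rw [mul_assoc, hEF, mul_one]
  rw [abs_le]
  constructor
  · -- -(a*(1+a*E)*A) ≤ B - A, i.e. A - B ≤ a*(1+a*E)*A
    nlinarith [mul_le_mul_of_nonneg_left hFge hAnn, mul_nonneg (mul_nonneg hanneg hanneg) (mul_nonneg hEpos.le hAnn)]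
  · -- B - A ≤ a*(1+a*E)*A : B - A ≤ A(E-1) = A*E*(1-F) ≤ A*E*a ≤ A*(a + a²E)
    have hE1 : E - 1 ≤ a * E := by nlinarith [mul_le_mul_of_nonneg_left hFge hEpos.le]
    have hEa : E ≤ 1 + a * E := by linarith
    nlinarith [mul_le_mul_of_nonneg_left hE1 hAnn, mul_le_mul_of_nonneg_left hEa (mul_nonneg (mul_nonneg hanneg hanneg) hAnn)]
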